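/- Let N be a Poisson point process on [0,1] with intensity λ ∈ L¹. Fix t₀ ∈ [η, 1−η] and disjoint intervals A = [0,t₀−η), B = [t₀−η, t₀+η], C = (t₀+η, 1]. For t ∈ [0,1] let M_t := N(I_t) with I_t = [(t−η)∨0, (t+η)∧1]. Then for any finite family t₀, t₁, …, t_{q−1} and any nonincreasing measurable set D' ⊆ ℕ^q, the map n ↦ P((M_{t_j})_{0≤j≤q−1} ∈ D' | M_{t₀} = n) is nonincreasing in n (wherever P(M_{t₀}=n)>0). -/

import Mathlib

open MeasureTheory Set ProbabilityTheory
open scoped ENNReal NNReal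

section PwcAux

variable {ι : Type*} [Fintype ι] [DecidableEq ι]

/-- Product of Poisson pmf weights. -/
noncomputable def pwcW (μ : ι → ℝ≥0) (x : ι → ℕ) : ℝ≥0∞ :=
  ∏ i, ENNReal.ofReal (poissonPMFReal (μ i) (x i))

/-- Total weight of a set of configurations. -/
noncomputable def pwcT (μ : ι → ℝ≥0) (E : Set (ι → ℕ)) : ℝ≥0∞ :=
  ∑' x : ι → ℕ, E.indicator (pwcW μ) x

lemma pwc_pois_step (r : ℝ≥0) (j : ℕ) :
    ((j+1 : ℕ) : ℝ≥0∞) * ENNReal.ofReal (poissonPMFReal r (j+1))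
      = ENNReal.ofReal (r : ℝ) * ENNReal.ofReal (poissonPMFReal r j) := by
  rw [← ENNReal.ofReal_natCast (j+1), ← ENNReal.ofReal_mul (by positivity),
    ← ENNReal.ofReal_mul (by exact r.coe_nonneg)]
  congr 1
  unfold poissonPMFReal
  push_cast
  have hj : (Nat.factorial j : ℝ) ≠ 0 := by positivity
  field_simp [Nat.factorial_succ]
  simp only [add_comm 1 j, Nat.factorial_succ, Nat.cast_mul, Nat.cast_add, Nat.cast_one]
  ring

lemma pwc_w_step (μ : ι → ℝ≥0) (y : ι → ℕ) (k : ι) :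
    ((y k + 1 : ℕ) : ℝ≥0∞) * pwcW μ (Function.update y k (y k + 1))
      = ENNReal.ofReal (μ k : ℝ) * pwcW μ y := by
  have hup : pwcW μ (Function.update y k (y k + 1))
      = ENNReal.ofReal (poissonPMFReal (μ k) (y k + 1))
        * ∏ i ∈ Finset.univ.erase k, ENNReal.ofReal (poissonPMFReal (μ i) (y i)) := by
    rw [pwcW, ← Finset.mul_prod_erase Finset.univ _ (Finset.mem_univ k)]
    congr 1
    · simp
    · exact Finset.prod_congr rfl fun i hi => by
        rw [Function.update_of_ne (Finset.ne_of_mem_erase hi)]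
  have hy : pwcW μ y
      = ENNReal.ofReal (poissonPMFReal (μ k) (y k))
        * ∏ i ∈ Finset.univ.erase k, ENNReal.ofReal (poissonPMFReal (μ i) (y i)) := by
    rw [pwcW, ← Finset.mul_prod_erase Finset.univ _ (Finset.mem_univ k)]
  rw [hup, hy, ← mul_assoc, ← mul_assoc, pwc_pois_step]

lemma pwc_reindex (h : (ι → ℕ) → ℝ≥0∞) (k : ι) :
    ∑' x : ι → ℕ, ((x k : ℝ≥0∞) * h x)
      = ∑' y : ι → ℕ, (((y k + 1 : ℕ) : ℝ≥0∞) * h (Function.update y k (y k + 1))) := by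
  set φ : (ι → ℕ) → (ι → ℕ) := fun y => Function.update y k (y k + 1) with hφ
  have hinj : Function.Injective φ := by
    intro y z hyz
    funext i
    by_cases hik : i = k
    · subst hik
      have := congrFun hyz i
      simpa [φ, Function.update_self] using this
    · have := congrFun hyz i
      simpa [φ, Function.update_of_ne hik] using this
  have hsupp : Function.support (fun x : ι → ℕ => (x k : ℝ≥0∞) * h x) ⊆ Set.range φ := by
    intro x hx
    rcases Nat.eq_zero_or_pos (x k) with h0 | h0
    · exfalso; apply hx; simp [h0]
    · refine ⟨Function.update x k (x k - 1), ?_⟩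
      funext i
      by_cases hik : i = k
      · subst hik; simp [φ, Function.update_self]; omega
      · simp [φ, Function.update_of_ne hik]
  have := hinj.tsum_eq (f := fun x : ι → ℕ => (x k : ℝ≥0∞) * h x) hsupp
  rw [← this]
  refine tsum_congr fun y => ?_
  simp [φ, Function.update_self]

lemma pwc_key_core (μ : ι → ℝ≥0) (S₀ : Finset ι) (A : Set (ι → ℕ)) (n : ℕ) :
    ((n+1 : ℕ) : ℝ≥0∞)
        * ∑' x : ι → ℕ, Set.indicator (A ∩ {x | ∑ i ∈ S₀, x i = n+1}) (pwcW μ) x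
      = ∑ k ∈ S₀, ENNReal.ofReal (μ k : ℝ)
          * ∑' y : ι → ℕ,
              Set.indicator {y | Function.update y k (y k + 1) ∈ A ∧ ∑ i ∈ S₀, y i = n}
                (pwcW μ) y := by
  classical
  set E : Set (ι → ℕ) := A ∩ {x | ∑ i ∈ S₀, x i = n+1} with hE
  rw [← ENNReal.tsum_mul_left]
  have step1 : ∀ x : ι → ℕ,
      ((n+1 : ℕ) : ℝ≥0∞) * Set.indicator E (pwcW μ) x
        = ∑ k ∈ S₀, (x k : ℝ≥0∞) * Set.indicator E (pwcW μ) x := by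
    intro x
    by_cases hx : x ∈ E
    · have hfx : ∑ i ∈ S₀, x i = n+1 := hx.2
      rw [← Finset.sum_mul]
      congr 1
      rw [← hfx]
      push_cast
      ring
    · simp [Set.indicator_of_notMem hx]
  calc ∑' x : ι → ℕ, ((n+1 : ℕ) : ℝ≥0∞) * Set.indicator E (pwcW μ) x
      = ∑' x : ι → ℕ, ∑ k ∈ S₀, (x k : ℝ≥0∞) * Set.indicator E (pwcW μ) x :=
        tsum_congr step1
    _ = ∑ k ∈ S₀, ∑' x : ι → ℕ, (x k : ℝ≥0∞) * Set.indicator E (pwcW μ) x :=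
        Summable.tsum_finsetSum (fun k _ => ENNReal.summable)
    _ = ∑ k ∈ S₀, ENNReal.ofReal (μ k : ℝ)
          * ∑' y : ι → ℕ,
              Set.indicator {y | Function.update y k (y k + 1) ∈ A ∧ ∑ i ∈ S₀, y i = n}
                (pwcW μ) y := by
        refine Finset.sum_congr rfl fun k hk => ?_
        rw [pwc_reindex (Set.indicator E (pwcW μ)) k, ← ENNReal.tsum_mul_left]
        refine tsum_congr fun y => ?_
        have hsum : ∑ i ∈ S₀, Function.update y k (y k + 1) i = (∑ i ∈ S₀, y i) + 1 := by
          rw [Finset.sum_update_of_mem hk, ← Finset.add_sum_erase S₀ y hk,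
            Finset.erase_eq]
          ring
        by_cases hy : Function.update y k (y k + 1) ∈ A ∧ ∑ i ∈ S₀, y i = n
        · have hmem : Function.update y k (y k + 1) ∈ E := ⟨hy.1, by simp [hsum, hy.2]⟩
          rw [Set.indicator_of_mem hmem, Set.indicator_apply]
          simp only [Set.mem_setOf_eq]
          rw [if_pos hy, pwc_w_step]
        · have hnmem : Function.update y k (y k + 1) ∉ E := by
            intro hc
            exact hy ⟨hc.1, by have := hc.2; simp only [Set.mem_setOf_eq, hsum] at this; omega⟩
          rw [Set.indicator_of_notMem hnmem, Set.indicator_apply]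
          simp only [Set.mem_setOf_eq]
          rw [if_neg hy]
          simp

lemma pwc_key_le (μ : ι → ℝ≥0) (S₀ : Finset ι) (A : Set (ι → ℕ)) (hA : IsLowerSet A) (n : ℕ) :
    ((n+1 : ℕ) : ℝ≥0∞) * pwcT μ (A ∩ {x | ∑ i ∈ S₀, x i = n+1})
      ≤ (∑ k ∈ S₀, ENNReal.ofReal (μ k : ℝ)) * pwcT μ (A ∩ {x | ∑ i ∈ S₀, x i = n}) := by
  rw [pwcT, pwc_key_core, Finset.sum_mul]
  refine Finset.sum_le_sum fun k hk => ?_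
  refine mul_le_mul_right ?_ _
  refine Summable.tsum_le_tsum (fun y => ?_) ENNReal.summable ENNReal.summable
  refine Set.indicator_le_indicator_of_subset ?_ (fun y => zero_le) y
  intro y hy
  refine ⟨hA ?_ hy.1, hy.2⟩
  intro i
  by_cases hik : i = k
  · subst hik; simp
  · simp [Function.update_of_ne hik]

lemma pwc_key_eq (μ : ι → ℝ≥0) (S₀ : Finset ι) (n : ℕ) :
    ((n+1 : ℕ) : ℝ≥0∞) * pwcT μ {x | ∑ i ∈ S₀, x i = n+1}
      = (∑ k ∈ S₀, ENNReal.ofReal (μ k : ℝ)) * pwcT μ {x | ∑ i ∈ S₀, x i = n} := by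
  have h := pwc_key_core μ S₀ Set.univ n
  simp only [Set.univ_inter, Set.mem_univ, true_and] at h
  rw [pwcT, h, Finset.sum_mul]
  rfl

lemma pwc_chain (μ : ι → ℝ≥0) (S₀ : Finset ι) (A : Set (ι → ℕ)) (hA : IsLowerSet A)
    (n n' : ℕ) (hnn : n ≤ n') :
    pwcT μ (A ∩ {x | ∑ i ∈ S₀, x i = n'}) * pwcT μ {x | ∑ i ∈ S₀, x i = n}
      ≤ pwcT μ (A ∩ {x | ∑ i ∈ S₀, x i = n}) * pwcT μ {x | ∑ i ∈ S₀, x i = n'} := by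
  set F : ℕ → ℝ≥0∞ := fun m => pwcT μ (A ∩ {x | ∑ i ∈ S₀, x i = m}) with hF
  set G : ℕ → ℝ≥0∞ := fun m => pwcT μ {x | ∑ i ∈ S₀, x i = m} with hG
  show F n' * G n ≤ F n * G n'
  induction n', hnn using Nat.le_induction with
  | base => rfl
  | succ n' hnn ih =>
      set Λ : ℝ≥0∞ := ∑ k ∈ S₀, ENNReal.ofReal (μ k : ℝ) with hΛ
      set c : ℝ≥0∞ := ((n'+1 : ℕ) : ℝ≥0∞) with hc
      have hc0 : c ≠ 0 := by simp [hc]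
      have hctop : c ≠ ∞ := by simp [hc]
      rw [← ENNReal.mul_le_mul_iff_right hc0 hctop]
      calc c * (F (n'+1) * G n) = (c * F (n'+1)) * G n := by ring
        _ ≤ (Λ * F n') * G n := by
            exact mul_le_mul_left (pwc_key_le μ S₀ A hA n') _
        _ = Λ * (F n' * G n) := by ring
        _ ≤ Λ * (F n * G n') := mul_le_mul_right ih _
        _ = F n * (Λ * G n') := by ring
        _ = F n * (c * G (n'+1)) := by rw [← pwc_key_eq μ S₀ n']
        _ = c * (F n * G (n'+1)) := by ring

lemma pwc_law {Ω : Type*} [MeasurableSpace Ω] (P : Measure Ω) (μ : ι → ℝ≥0)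
    (X : Ω → ι → ℕ) (hXm : Measurable X)
    (hpt : ∀ x : ι → ℕ, P {ω | X ω = x} = pwcW μ x) (E : Set (ι → ℕ)) :
    P {ω | X ω ∈ E} = pwcT μ E := by
  have hdecomp : {ω | X ω ∈ E} = ⋃ x ∈ E, X ⁻¹' {x} := by
    ext ω; simp
  rw [hdecomp, measure_biUnion (Set.to_countable E) ?_ ?_]
  · rw [pwcT, ← tsum_subtype]
    exact tsum_congr fun x => hpt x
  · intro x hx y hy hxy
    refine Set.disjoint_left.mpr fun ω hωx hωy => ?_
    exact hxy (by rw [← hωx, ← hωy])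
  · exact fun x _ => hXm (measurableSet_singleton x)

lemma pwc_telescope (g : ℝ → ℕ) (hg : Monotone g) (v : ℕ → ℝ) (hv : Monotone v)
    (p r : ℕ) (hpr : p ≤ r) :
    g (v r) - g (v p) = ∑ k ∈ Finset.Ico p r, (g (v (k+1)) - g (v k)) := by
  induction r, hpr using Nat.le_induction with
  | base => simp
  | succ r hpr ih =>
      rw [Finset.sum_Ico_succ_top hpr, ← ih]
      have h1 : g (v p) ≤ g (v r) := hg (hv hpr)
      have h2 : g (v r) ≤ g (v (r+1)) := hg (hv (Nat.le_succ r))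
      omega

lemma pwc_div_le_div {a b c d : ℝ≥0∞} (hb0 : b ≠ 0) (hbt : b ≠ ∞) (hd0 : d ≠ 0) (hdt : d ≠ ∞)
    (h : a * d ≤ c * b) : a / b ≤ c / d := by
  have h1 : a / b = a * d / (b * d) := by
    rw [mul_comm b d, ← ENNReal.mul_div_mul_left a b hd0 hdt, mul_comm d a]
  have h2 : c / d = c * b / (b * d) := by
    rw [← ENNReal.mul_div_mul_left c d hb0 hbt, mul_comm b c]
  rw [h1, h2]
  exact ENNReal.div_le_div h le_rfl

end PwcAux

/-- Conditional monotonicity of Poisson window counts: for a Poisson process on `[0,1]`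
with window counts `M_t = N(I_t)`, `I_t = [(t−η)∨0,(t+η)∧1]`, and a nonincreasing set
`D' ⊆ ℕ^q`, the map `n ↦ P((M_{t_j})_j ∈ D' | M_{t₀} = n)` is nonincreasing in `n`. -/
theorem poisson_window_counts_conditional_monotone
    {Ω : Type*} [MeasurableSpace Ω] (P : Measure Ω) [IsProbabilityMeasure P]
    (N : Ω → ℝ → ℕ)
    (hpath : ∀ ω, Monotone (N ω))
    (hmeas : ∀ t : ℝ, Measurable (fun ω => N ω t))
    (lam : ℝ → ℝ) (hlam : Measurable lam) (hlam0 : ∀ s, 0 ≤ lam s)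
    (hlamInt : IntegrableOn lam (Icc (-1 : ℝ) 2))
    -- Poisson distributed increments
    (hdist : ∀ a b : ℝ, a ≤ b → ∀ k : ℕ,
      P {ω | N ω b - N ω a = k}
        = ENNReal.ofReal (poissonPMFReal (∫ s in Ioc a b, lam s).toNNReal k))
    -- independent increments over pairwise disjoint intervals
    (hindep : ∀ (q : ℕ) (a b : Fin q → ℝ), (∀ i, a i ≤ b i) →
      Pairwise (Function.onFun Disjoint (fun i => Ioc (a i) (b i))) →
      iIndepFun (fun i ω => N ω (b i) - N ω (a i)) P)
    (η : ℝ) (hη : η ∈ Ioc (0:ℝ) 1)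
    (q : ℕ) (t : Fin q → ℝ) (ht : ∀ j, t j ∈ Icc (0:ℝ) 1)
    (hq : 1 ≤ q) (ht₀ : t ⟨0, hq⟩ ∈ Icc η (1 - η))
    -- window counts
    (M : Ω → Fin q → ℕ)
    (hM : ∀ ω j, M ω j = N ω (min (t j + η) 1) - N ω (max (t j - η) 0))
    (D' : Set (Fin q → ℕ)) (hD' : IsLowerSet D') :
    ∀ n n' : ℕ, n ≤ n' →
      0 < P {ω | M ω ⟨0, hq⟩ = n} → 0 < P {ω | M ω ⟨0, hq⟩ = n'} →
      P ({ω | M ω ∈ D'} ∩ {ω | M ω ⟨0, hq⟩ = n'}) / P {ω | M ω ⟨0, hq⟩ = n'}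
        ≤ P ({ω | M ω ∈ D'} ∩ {ω | M ω ⟨0, hq⟩ = n}) / P {ω | M ω ⟨0, hq⟩ = n} := by
  classical
  intro n n' hnn hposn hposn'
  -- window endpoints
  set a : Fin q → ℝ := fun j => max (t j - η) 0 with ha
  set b : Fin q → ℝ := fun j => min (t j + η) 1 with hb
  have hab : ∀ j, a j ≤ b j := by
    intro j
    have h1 := (ht j).1
    have h2 := (ht j).2
    have h3 := hη.1
    have h4 := hη.2
    simp only [ha, hb, max_le_iff, le_min_iff]
    constructor
    · constructor <;> linarith
    · constructor <;> linarith
  -- the finite set of endpoints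
  set s : Finset ℝ := Finset.image a Finset.univ ∪ Finset.image b Finset.univ with hs
  have hamem : ∀ j, a j ∈ s := fun j =>
    Finset.mem_union_left _ (Finset.mem_image_of_mem a (Finset.mem_univ j))
  have hbmem : ∀ j, b j ∈ s := fun j =>
    Finset.mem_union_right _ (Finset.mem_image_of_mem b (Finset.mem_univ j))
  set c : ℕ := s.card with hcard
  have hc0 : 0 < c := Finset.card_pos.mpr ⟨a ⟨0, hq⟩, hamem _⟩
  have o : Fin c ≃o {x // x ∈ s} := s.orderIsoOfFin hcard.symm
  -- the monotone enumeration of endpoints, extended to ℕ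
  set v : ℕ → ℝ := fun k => (o ⟨min k (c-1), by omega⟩ : ℝ) with hv
  have hvmono : Monotone v := by
    intro k l hkl
    have : (⟨min k (c-1), by omega⟩ : Fin c) ≤ ⟨min l (c-1), by omega⟩ := by
      simp only [Fin.mk_le_mk]
      omega
    exact Subtype.coe_le_coe.mpr (o.monotone this)
  -- indices of the endpoints
  set p : Fin q → ℕ := fun j => (o.symm ⟨a j, hamem j⟩ : Fin c) with hp
  set r : Fin q → ℕ := fun j => (o.symm ⟨b j, hbmem j⟩ : Fin c) with hr
  have hpc : ∀ j, p j < c := fun j => (o.symm ⟨a j, hamem j⟩).isLt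
  have hrc : ∀ j, r j < c := fun j => (o.symm ⟨b j, hbmem j⟩).isLt
  have hvp : ∀ j, v (p j) = a j := by
    intro j
    have h1 : min (p j) (c-1) = p j := by have := hpc j; omega
    simp only [hv]
    have : (⟨min (p j) (c-1), by omega⟩ : Fin c) = o.symm ⟨a j, hamem j⟩ := by
      apply Fin.ext; simp [h1, hp]
      exact Nat.le_sub_one_of_lt (hpc j)
    rw [this, o.apply_symm_apply]
  have hvr : ∀ j, v (r j) = b j := by
    intro j
    have h1 : min (r j) (c-1) = r j := by have := hrc j; omega
    simp only [hv]
    have : (⟨min (r j) (c-1), by omega⟩ : Fin c) = o.symm ⟨b j, hbmem j⟩ := by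
      apply Fin.ext; simp [h1, hr]
      exact Nat.le_sub_one_of_lt (hrc j)
    rw [this, o.apply_symm_apply]
  have hpr : ∀ j, p j ≤ r j := by
    intro j
    have : (⟨a j, hamem j⟩ : {x // x ∈ s}) ≤ ⟨b j, hbmem j⟩ := hab j
    exact o.symm.monotone this
  -- the increments over the atoms
  set X : Ω → Fin c → ℕ := fun ω k => N ω (v (k+1)) - N ω (v k) with hX
  set μ : Fin c → ℝ≥0 := fun k => (∫ x in Ioc (v k) (v (k+1)), lam x).toNNReal with hμ
  have hXm : Measurable X := by
    refine measurable_pi_lambda _ fun k => ?_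
    have hsub : Measurable (fun pq : ℕ × ℕ => pq.1 - pq.2) := measurable_of_countable _
    exact hsub.comp ((hmeas (v (k+1))).prodMk (hmeas (v k)))
  -- the point masses of X
  have hsingle : ∀ x : Fin c → ℕ, P {ω | X ω = x} = pwcW μ x := by
    intro x
    have hdisj : Pairwise (Function.onFun Disjoint
        (fun i : Fin c => Ioc (v i) (v (i+1)))) := by
      intro i j hij
      refine Set.Ioc_disjoint_Ioc.mpr ?_
      rcases lt_or_gt_of_ne (fun h => hij (Fin.ext h) : (i:ℕ) ≠ (j:ℕ)) with h | h
      · exact le_trans (min_le_left _ _) (le_trans (hvmono (by omega)) (le_max_right _ _))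
      · exact le_trans (min_le_right _ _) (le_trans (hvmono (by omega)) (le_max_left _ _))
    have hind := hindep c (fun k => v k) (fun k => v (k+1))
      (fun k => hvmono (Nat.le_succ _)) hdisj
    have hsets : ∀ k : Fin c,
        MeasurableSet[MeasurableSpace.comap (fun ω => N ω (v (k+1)) - N ω (v k))
          inferInstance] ((fun ω => N ω (v (k+1)) - N ω (v k)) ⁻¹' {x k}) :=
      fun k => ⟨{x k}, measurableSet_singleton _, rfl⟩
    have hmeasInter := hind.meas_iInter hsets
    have hset : {ω | X ω = x}
        = ⋂ k : Fin c, (fun ω => N ω (v (k+1)) - N ω (v k)) ⁻¹' {x k} := by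
      ext ω
      simp only [Set.mem_setOf_eq, Set.mem_iInter, Set.mem_preimage, Set.mem_singleton_iff]
      constructor
      · intro h k; rw [← h]
      · intro h; funext k; exact h k
    rw [hset, hmeasInter, pwcW]
    refine Finset.prod_congr rfl fun k _ => ?_
    have : (fun ω => N ω (v (k+1)) - N ω (v k)) ⁻¹' {x k}
        = {ω | N ω (v (k+1)) - N ω (v k) = x k} := rfl
    rw [this, hdist (v k) (v (k+1)) (hvmono (Nat.le_succ _)) (x k)]
  -- expressing M in terms of X
  set K : Fin q → Finset (Fin c) :=
    fun j => Finset.univ.filter (fun k : Fin c => p j ≤ (k:ℕ) ∧ (k:ℕ) < r j) with hK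
  set Φ : (Fin c → ℕ) → (Fin q → ℕ) := fun x j => ∑ k ∈ K j, x k with hΦ
  have hMX : ∀ ω, M ω = Φ (X ω) := by
    intro ω
    funext j
    have htel := pwc_telescope (N ω) (hpath ω) v hvmono (p j) (r j) (hpr j)
    have hM' : M ω j = N ω (v (r j)) - N ω (v (p j)) := by
      rw [hM ω j, hvp, hvr]
    rw [hM', htel]
    show _ = ∑ k ∈ K j, X ω k
    refine Finset.sum_nbij' (i := fun k => (⟨k % c, Nat.mod_lt _ hc0⟩ : Fin c))
      (j := fun k => (k : ℕ)) ?_ ?_ ?_ ?_ ?_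
    · intro k hk
      simp only [Finset.mem_Ico] at hk
      have hkc : k < c := lt_of_lt_of_le hk.2 (le_of_lt (hrc j))
      have hmod : k % c = k := Nat.mod_eq_of_lt hkc
      simp only [hK, Finset.mem_filter, Finset.mem_univ, true_and, hmod]
      exact ⟨hk.1, hk.2⟩
    · intro k hk
      simp only [hK, Finset.mem_filter, Finset.mem_univ, true_and] at hk
      simp only [Finset.mem_Ico]
      exact hk
    · intro k hk
      simp only [Finset.mem_Ico] at hk
      have hkc : k < c := lt_of_lt_of_le hk.2 (le_of_lt (hrc j))
      simp [Nat.mod_eq_of_lt hkc]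
    · intro k hk
      apply Fin.ext
      simp [Nat.mod_eq_of_lt k.isLt]
    · intro k hk
      simp only [Finset.mem_Ico] at hk
      have hkc : k < c := lt_of_lt_of_le hk.2 (le_of_lt (hrc j))
      simp only [hX, Nat.mod_eq_of_lt hkc]
  have hΦmono : Monotone Φ := by
    intro x y hxy j
    exact Finset.sum_le_sum fun k _ => hxy k
  -- the lower set of configurations and the conditioning sum
  set A : Set (Fin c → ℕ) := Φ ⁻¹' D' with hA
  have hAlow : IsLowerSet A := fun x y hxy hx => hD' (hΦmono hxy) hx
  set S₀ : Finset (Fin c) := K ⟨0, hq⟩ with hS₀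
  -- rewriting the events
  have hev1 : ∀ m : ℕ, {ω | M ω ⟨0, hq⟩ = m}
      = {ω | X ω ∈ {x | ∑ k ∈ S₀, x k = m}} := by
    intro m
    ext ω
    simp only [Set.mem_setOf_eq, hMX ω]
    rfl
  have hev2 : ∀ m : ℕ, {ω | M ω ∈ D'} ∩ {ω | M ω ⟨0, hq⟩ = m}
      = {ω | X ω ∈ A ∩ {x | ∑ k ∈ S₀, x k = m}} := by
    intro m
    ext ω
    simp only [Set.mem_inter_iff, Set.mem_setOf_eq, hMX ω]
    rfl
  -- translate to pwcT
  have hPT : ∀ E : Set (Fin c → ℕ), P {ω | X ω ∈ E} = pwcT μ E :=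
    pwc_law P μ X hXm hsingle
  have e1 : ∀ m : ℕ, P {ω | M ω ⟨0, hq⟩ = m} = pwcT μ {x | ∑ k ∈ S₀, x k = m} := by
    intro m; rw [hev1 m, hPT]
  have e2 : ∀ m : ℕ, P ({ω | M ω ∈ D'} ∩ {ω | M ω ⟨0, hq⟩ = m})
      = pwcT μ (A ∩ {x | ∑ k ∈ S₀, x k = m}) := by
    intro m; rw [hev2 m, hPT]
  rw [e1] at hposn hposn'
  rw [e1 n, e1 n', e2 n, e2 n']
  -- finish by the chain inequality
  have hGn : pwcT μ {x | ∑ k ∈ S₀, x k = n} ≠ 0 := ne_of_gt hposn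
  have hGn' : pwcT μ {x | ∑ k ∈ S₀, x k = n'} ≠ 0 := ne_of_gt hposn'
  have hGnt : pwcT μ {x | ∑ k ∈ S₀, x k = n} ≠ ∞ := by
    rw [← e1]; exact measure_ne_top P _
  have hGn't : pwcT μ {x | ∑ k ∈ S₀, x k = n'} ≠ ∞ := by
    rw [← e1]; exact measure_ne_top P _
  exact pwc_div_le_div hGn' hGn't hGn hGnt
    (pwc_chain μ S₀ A hAlow n n' hnn)
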